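/- Let G be a finite group that is a semidirect product M ⋉ N with N abelian normal, let χ be a (1-dimensional) character of N, R_χ = {m ∈ M | χ(m⁻¹nm) = χ(n) for all n ∈ N} its stabilizer in M, and π an irreducible representation of R_χ. Then the induced representation Ind_{R_χ ⋉ N}^G (π ⊗ χ) is irreducible. -/
import Mathlib


/-- A representation is irreducible if the space is nonzero and the only invariant
subspaces are `⊥` and `⊤`. -/
def IsIrreducibleRep {k G W : Type*} [Field k] [Group G] [AddCommGroup W] [Module k W]
    (σ : Representation k G W) : Prop :=
  (∃ w : W, w ≠ 0) ∧
    ∀ U : Submodule k W, (∀ (g : G), ∀ w ∈ U, σ g w ∈ U) → U = ⊥ ∨ U = ⊤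

/-- The space of the representation induced from a representation `ρ` of a subgroup `H`
of `G`: functions `f : G → V` with `f(hg) = ρ(h)(f g)`. -/
def IndSpace {k G V : Type*} [Field k] [Group G] [AddCommGroup V] [Module k V]
    (H : Subgroup G) (ρ : Representation k H V) : Submodule k (G → V) where
  carrier := {f | ∀ (h : H) (g : G), f (↑h * g) = ρ h (f g)}
  add_mem' := by
    intro f₁ f₂ h₁ h₂ h g
    simp only [Pi.add_apply, h₁ h g, h₂ h g, map_add]
  zero_mem' := by intro h g; simp
  smul_mem' := by
    intro c f hf h g
    simp only [Pi.smul_apply, hf h g, map_smul]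

/-- The representation of `G` induced from a representation `ρ` of a subgroup `H`,
acting by right translation on `IndSpace H ρ`. -/
def indRep {k G V : Type*} [Field k] [Group G] [AddCommGroup V] [Module k V]
    (H : Subgroup G) (ρ : Representation k H V) :
    Representation k G (IndSpace H ρ) where
  toFun g :=
    { toFun := fun f => ⟨fun x => f.1 (x * g), fun h x => by
        show f.1 ((↑h * x) * g) = ρ h (f.1 (x * g))
        rw [mul_assoc]; exact f.2 h (x * g)⟩
      map_add' := fun f₁ f₂ => by ext x; rfl
      map_smul' := fun c f => by ext x; rfl }
  map_one' := by
    refine LinearMap.ext fun f => Subtype.ext (funext fun x => ?_)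
    simp
  map_mul' := fun g₁ g₂ => by
    refine LinearMap.ext fun f => Subtype.ext (funext fun x => ?_)
    simp [mul_assoc]

/-- Sum of a nontrivial character over a finite abelian group vanishes. -/
lemma sum_char_eq_zero' {N : Type*} [CommGroup N] [Fintype N] (ψ : N →* ℂˣ)
    (hψ : ∃ n, ψ n ≠ 1) : ∑ n : N, (ψ n : ℂ) = 0 := by
  obtain ⟨n₀, hn₀⟩ := hψ
  have h : (ψ n₀ : ℂ) * ∑ n : N, (ψ n : ℂ) = ∑ n : N, (ψ n : ℂ) := by
    rw [Finset.mul_sum]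
    exact Fintype.sum_bijective (fun n => n₀ * n) (Group.mulLeft_bijective n₀) _ _
      (fun n => by rw [map_mul]; push_cast; ring)
  have h2 : ((ψ n₀ : ℂ) - 1) * ∑ n : N, (ψ n : ℂ) = 0 := by rw [sub_mul, h]; ring
  rcases mul_eq_zero.1 h2 with h3 | h3
  · exact absurd (Units.ext (by simpa using sub_eq_zero.1 h3)) hn₀
  · exact h3

open scoped Classical

/-- The standard element of the induced space supported on `H` with value `v` at `1`. -/
noncomputable def sfun {k G V : Type*} [Field k] [Group G] [AddCommGroup V] [Module k V]
    (H : Subgroup G) (ρ : Representation k H V) (v : V) : IndSpace H ρ :=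
  ⟨fun g => if hg : g ∈ H then ρ ⟨g, hg⟩ v else 0, by
    intro h g
    dsimp only
    by_cases hg : g ∈ H
    · rw [dif_pos hg, dif_pos (mul_mem h.2 hg)]
      have : (⟨↑h * g, mul_mem h.2 hg⟩ : H) = h * ⟨g, hg⟩ := rfl
      rw [this, map_mul]; rfl
    · rw [dif_neg hg, dif_neg (fun hmem => hg (by
        have := mul_mem (inv_mem h.2) hmem
        simpa using this)), map_zero]⟩

lemma sfun_apply_mem {k G V : Type*} [Field k] [Group G] [AddCommGroup V] [Module k V]
    (H : Subgroup G) (ρ : Representation k H V) (v : V) {g : G} (hg : g ∈ H) :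
    (sfun H ρ v).1 g = ρ ⟨g, hg⟩ v := by
  show (if hg : g ∈ H then ρ ⟨g, hg⟩ v else 0) = _
  exact dif_pos hg

lemma sfun_apply_notMem {k G V : Type*} [Field k] [Group G] [AddCommGroup V] [Module k V]
    (H : Subgroup G) (ρ : Representation k H V) (v : V) {g : G} (hg : g ∉ H) :
    (sfun H ρ v).1 g = 0 := by
  show (if hg : g ∈ H then ρ ⟨g, hg⟩ v else 0) = _
  exact dif_neg hg

/-- If `f` in the induced space vanishes off `H`, it is `sfun H ρ (f 1)`. -/
lemma eq_sfun {k G V : Type*} [Field k] [Group G] [AddCommGroup V] [Module k V]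
    (H : Subgroup G) (ρ : Representation k H V) (f : IndSpace H ρ)
    (hf : ∀ g ∉ H, f.1 g = 0) : f = sfun H ρ (f.1 1) := by
  refine Subtype.ext (funext fun g => ?_)
  by_cases hg : g ∈ H
  · rw [sfun_apply_mem H ρ _ hg]
    have := f.2 ⟨g, hg⟩ 1
    rw [mul_one] at this
    exact this
  · rw [sfun_apply_notMem H ρ _ hg]
    exact hf g hg

lemma sfun_add {k G V : Type*} [Field k] [Group G] [AddCommGroup V] [Module k V]
    (H : Subgroup G) (ρ : Representation k H V) (v w : V) :
    sfun H ρ (v + w) = sfun H ρ v + sfun H ρ w := by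
  refine Subtype.ext (funext fun g => ?_)
  show _ = (sfun H ρ v).1 g + (sfun H ρ w).1 g
  by_cases hg : g ∈ H
  · simp only [sfun_apply_mem H ρ _ hg, map_add]
  · simp only [sfun_apply_notMem H ρ _ hg, add_zero]

lemma sfun_smul {k G V : Type*} [Field k] [Group G] [AddCommGroup V] [Module k V]
    (H : Subgroup G) (ρ : Representation k H V) (c : k) (v : V) :
    sfun H ρ (c • v) = c • sfun H ρ v := by
  refine Subtype.ext (funext fun g => ?_)
  show _ = c • (sfun H ρ v).1 g
  by_cases hg : g ∈ H
  · simp only [sfun_apply_mem H ρ _ hg, map_smul]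
  · simp only [sfun_apply_notMem H ρ _ hg, smul_zero]

lemma sfun_zero {k G V : Type*} [Field k] [Group G] [AddCommGroup V] [Module k V]
    (H : Subgroup G) (ρ : Representation k H V) : sfun H ρ (0 : V) = 0 := by
  refine Subtype.ext (funext fun g => ?_)
  show _ = (0 : V)
  by_cases hg : g ∈ H
  · simp only [sfun_apply_mem H ρ _ hg, map_zero]
  · exact sfun_apply_notMem H ρ _ hg

open SemidirectProduct

/-- **(Clifford/Mackey)** Let `G = N ⋊ M` with `N` abelian, `χ` a character of `N`,
`R_χ ≤ M` its stabilizer, `π` an irreducible representation of `R_χ`, and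
`ρ = π ⊗ χ` the corresponding representation of `H = R_χ ⋉ N`. Then the induced
representation `Ind_H^G ρ` is irreducible. -/
theorem stmt18 {N M : Type*} [CommGroup N] [Fintype N] [Group M] [Fintype M]
    (φ : M →* MulAut N) (χ : N →* ℂˣ)
    {V : Type*} [AddCommGroup V] [Module ℂ V] [FiniteDimensional ℂ V]
    (Rχ : Subgroup M) (hRχ : ∀ m : M, m ∈ Rχ ↔ ∀ n : N, χ (φ m n) = χ n)
    (H : Subgroup (N ⋊[φ] M)) (hH : ∀ g : N ⋊[φ] M, g ∈ H ↔ g.right ∈ Rχ)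
    (π : Representation ℂ Rχ V) (hπ : IsIrreducibleRep π)
    (ρ : Representation ℂ H V)
    (hρ : ∀ (g : H) (hg : (g : N ⋊[φ] M).right ∈ Rχ) (v : V),
      ρ g v = (χ (g : N ⋊[φ] M).left : ℂ) • π ⟨(g : N ⋊[φ] M).right, hg⟩ v) :
    IsIrreducibleRep (indRep H ρ) := by
  classical
  obtain ⟨⟨v₀, hv₀⟩, hπirr⟩ := hπ
  have hinlH : ∀ x : N, (inl x : N ⋊[φ] M) ∈ H := fun x =>
    (hH _).2 (by rw [right_inl]; exact Rχ.one_mem)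
  -- membership unfolding
  have hmem : ∀ u : ↥(IndSpace H ρ), ∀ (h : H) (g : N ⋊[φ] M),
      u.1 (↑h * g) = ρ h (u.1 g) := fun u => u.2
  -- key1 : values at inl x * inr μ
  have key1 : ∀ (u : ↥(IndSpace H ρ)) (x : N) (μ : M),
      u.1 (inl x * inr μ) = (χ x : ℂ) • u.1 (inr μ) := by
    intro u x μ
    have h1 := hmem u ⟨inl x, hinlH x⟩ (inr μ)
    have hg : ((⟨inl x, hinlH x⟩ : H) : N ⋊[φ] M).right ∈ Rχ := by
      rw [right_inl]; exact Rχ.one_mem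
    have h2 := hρ ⟨inl x, hinlH x⟩ hg (u.1 (inr μ))
    have h3 : (⟨((⟨inl x, hinlH x⟩ : H) : N ⋊[φ] M).right, hg⟩ : Rχ) = 1 :=
      Subtype.ext rfl
    rw [h3, map_one] at h2
    rw [h1, h2]
    simp [left_inl]
  -- key2 : ρ at inr r is π r
  have key2 : ∀ (r : Rχ) (hr : (inr (r : M) : N ⋊[φ] M) ∈ H) (v : V),
      ρ ⟨inr (r : M), hr⟩ v = π r v := by
    intro r hr v
    have hg : ((⟨inr (r : M), hr⟩ : H) : N ⋊[φ] M).right ∈ Rχ := by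
      rw [right_inr]; exact r.2
    have h2 := hρ ⟨inr (r : M), hr⟩ hg v
    have h3 : (⟨((⟨inr (r : M), hr⟩ : H) : N ⋊[φ] M).right, hg⟩ : Rχ) = r :=
      Subtype.ext rfl
    rw [h3] at h2
    simpa [left_inr] using h2
  have hinrH : ∀ r : Rχ, (inr (r : M) : N ⋊[φ] M) ∈ H := fun r =>
    (hH _).2 (by rw [right_inr]; exact r.2)
  -- the averaging projector
  set P : ↥(IndSpace H ρ) → ↥(IndSpace H ρ) := fun u =>
    (Fintype.card N : ℂ)⁻¹ • ∑ n : N, (((χ n)⁻¹ : ℂˣ) : ℂ) • indRep H ρ (inl n) u with hPdef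
  have Pval : ∀ (u : ↥(IndSpace H ρ)) (g : N ⋊[φ] M),
      (P u).1 g = (Fintype.card N : ℂ)⁻¹ •
        ∑ n : N, (((χ n)⁻¹ : ℂˣ) : ℂ) • u.1 (g * inl n) := by
    intro u g
    rw [hPdef]
    rw [SetLike.val_smul, Pi.smul_apply]
    congr 1
    rw [AddSubmonoidClass.coe_finset_sum, Finset.sum_apply]
    rfl
  -- P fixes the value at 1
  have P1 : ∀ u : ↥(IndSpace H ρ), (P u).1 1 = u.1 1 := by
    intro u
    rw [Pval]
    have hterm : ∀ n : N, (((χ n)⁻¹ : ℂˣ) : ℂ) • u.1 (1 * inl n) = u.1 1 := by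
      intro n
      have h1 : u.1 (inl n * inr (1 : M)) = (χ n : ℂ) • u.1 (inr (1 : M)) := key1 u n 1
      rw [map_one, mul_one] at h1
      rw [one_mul, h1, smul_smul]
      norm_cast
      rw [inv_mul_cancel]
      simp
    rw [Finset.sum_congr rfl (fun n _ => hterm n), Finset.sum_const, Finset.card_univ,
      ← Nat.cast_smul_eq_nsmul ℂ, smul_smul,
      inv_mul_cancel₀ (Nat.cast_ne_zero.2 Fintype.card_ne_zero), one_smul]
  -- P kills values off H
  have P2 : ∀ (u : ↥(IndSpace H ρ)) (g : N ⋊[φ] M), g ∉ H → (P u).1 g = 0 := by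
    intro u g hg
    rw [Pval]
    set ψ : N →* ℂˣ := (χ.comp (φ g.right).toMonoidHom) * χ⁻¹ with hψdef
    have hψ : ∀ n : N, (ψ n : ℂ) = (χ (φ g.right n) : ℂ) * (((χ n)⁻¹ : ℂˣ) : ℂ) := by
      intro n
      rw [hψdef]
      simp [MonoidHom.mul_apply, MonoidHom.inv_apply]
    have hterm : ∀ n : N, (((χ n)⁻¹ : ℂˣ) : ℂ) • u.1 (g * inl n) =
        ((ψ n : ℂ) * (χ g.left : ℂ)) • u.1 (inr g.right) := by
      intro n
      have hsplit : g * inl n = inl (g.left * φ g.right n) * inr g.right := by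
        ext <;> simp [mul_left, mul_right]
      rw [hsplit, key1 u _ g.right, smul_smul, map_mul, hψ n]
      push_cast
      ring_nf
    have hψnt : ∃ n, ψ n ≠ 1 := by
      have hgr : g.right ∉ Rχ := fun h => hg ((hH g).2 h)
      rw [hRχ] at hgr
      push_neg at hgr
      obtain ⟨n₁, hn₁⟩ := hgr
      refine ⟨n₁, fun h1 => hn₁ ?_⟩
      rw [hψdef] at h1
      have : χ (φ g.right n₁) * (χ n₁)⁻¹ = 1 := h1
      rwa [mul_inv_eq_one] at this
    rw [Finset.sum_congr rfl (fun n _ => hterm n)]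
    rw [← Finset.sum_smul, ← Finset.sum_mul, sum_char_eq_zero' ψ hψnt, zero_mul,
      zero_smul, smul_zero]
  refine ⟨⟨sfun H ρ v₀, fun h0 => hv₀ ?_⟩, ?_⟩
  · have h1 : (sfun H ρ v₀).1 1 = v₀ := by
      rw [sfun_apply_mem H ρ _ H.one_mem]
      have : (⟨(1 : N ⋊[φ] M), H.one_mem⟩ : H) = 1 := rfl
      rw [this, map_one]
      rfl
    rw [h0] at h1
    simpa using h1.symm
  intro U hU
  by_cases hUbot : U = ⊥
  · exact Or.inl hUbot
  refine Or.inr ?_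
  -- the subspace W of values
  set W : Submodule ℂ V :=
    { carrier := {v | sfun H ρ v ∈ U}
      add_mem' := fun {a b} ha hb => by
        simp only [Set.mem_setOf_eq, sfun_add] at *
        exact U.add_mem ha hb
      zero_mem' := by
        simp only [Set.mem_setOf_eq, sfun_zero]
        exact U.zero_mem
      smul_mem' := fun c v hv => by
        simp only [Set.mem_setOf_eq, sfun_smul] at *
        exact U.smul_mem c hv } with hWdef
  have hWmem : ∀ v : V, v ∈ W ↔ sfun H ρ v ∈ U := fun v => Iff.rfl
  -- W is π-invariant
  have Winv : ∀ (r : Rχ), ∀ v ∈ W, π r v ∈ W := by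
    intro r v hv
    have hr := hinrH r
    have heq : sfun H ρ (π r v) = indRep H ρ (inr (r : M)) (sfun H ρ v) := by
      refine Subtype.ext (funext fun g => ?_)
      show (sfun H ρ (π r v)).1 g = (sfun H ρ v).1 (g * inr (r : M))
      by_cases hg : g ∈ H
      · have hg2 : g * inr (r : M) ∈ H := mul_mem hg hr
        rw [sfun_apply_mem H ρ _ hg, sfun_apply_mem H ρ _ hg2]
        have : (⟨g * inr (r : M), hg2⟩ : H) = ⟨g, hg⟩ * ⟨inr (r : M), hr⟩ := rfl
        rw [this, map_mul, Module.End.mul_apply, key2 r hr v]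
      · have hg2 : g * inr (r : M) ∉ H := fun hmem =>
          hg (by simpa using mul_mem hmem (inv_mem hr))
        rw [sfun_apply_notMem H ρ _ hg, sfun_apply_notMem H ρ _ hg2]
    rw [hWmem, heq]
    exact hU _ _ hv
  -- W is nonzero
  obtain ⟨u, huU, hune⟩ := (Submodule.ne_bot_iff U).1 hUbot
  obtain ⟨g₀, hg₀⟩ : ∃ g₀, u.1 g₀ ≠ 0 := by
    by_contra h
    push_neg at h
    exact hune (Subtype.ext (funext h))
  set u₁ := indRep H ρ (inr g₀.right) u with hu₁def
  have hu₁U : u₁ ∈ U := hU _ _ huU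
  have hu₁1 : u₁.1 1 ≠ 0 := by
    have h1 : u₁.1 1 = u.1 (inr g₀.right) := by
      show u.1 (1 * inr g₀.right) = _
      rw [one_mul]
    have h2 : u.1 g₀ = (χ g₀.left : ℂ) • u.1 (inr g₀.right) := by
      conv_lhs => rw [← inl_left_mul_inr_right g₀]
      exact key1 u g₀.left g₀.right
    intro h0
    apply hg₀
    rw [h2, ← h1, h0, smul_zero]
  have hPU : P u₁ ∈ U :=
    Submodule.smul_mem _ _ (Submodule.sum_mem _ fun n _ =>
      Submodule.smul_mem _ _ (hU _ _ hu₁U))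
  have hPs : P u₁ = sfun H ρ ((P u₁).1 1) :=
    eq_sfun H ρ (P u₁) (fun g hg => P2 u₁ g hg)
  have hWtop : W = ⊤ := by
    rcases hπirr W Winv with h | h
    · exfalso
      have hvW : (P u₁).1 1 ∈ W := (hWmem _).2 (hPs ▸ hPU)
      rw [h] at hvW
      rw [P1] at hvW
      exact hu₁1 (by simpa using hvW)
    · exact h
  have hsU : ∀ v : V, sfun H ρ v ∈ U := fun v =>
    (hWmem v).1 (hWtop ▸ Submodule.mem_top)
  -- conclude U = ⊤
  rw [Submodule.eq_top_iff']
  intro f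
  set c := (Finset.univ.filter (fun m : M => m ∈ Rχ)).card with hcdef
  have hc : (c : ℂ) ≠ 0 := by
    refine Nat.cast_ne_zero.2 (Finset.card_ne_zero_of_mem (a := (1 : M)) ?_)
    exact Finset.mem_filter.2 ⟨Finset.mem_univ 1, Rχ.one_mem⟩
  have hrepr : f = (c : ℂ)⁻¹ •
      ∑ m : M, indRep H ρ (inr m)⁻¹ (sfun H ρ (f.1 (inr m))) := by
    refine Subtype.ext (funext fun g => ?_)
    have hco : ((((c : ℂ)⁻¹ •
        ∑ m : M, indRep H ρ (inr m)⁻¹ (sfun H ρ (f.1 (inr m)))) : ↥(IndSpace H ρ)) :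
        (N ⋊[φ] M) → V) g = (c : ℂ)⁻¹ •
        ∑ m : M, (sfun H ρ (f.1 (inr m))).1 (g * (inr m)⁻¹) := by
      rw [SetLike.val_smul, Pi.smul_apply]
      congr 1
      rw [AddSubmonoidClass.coe_finset_sum, Finset.sum_apply]
      rfl
    rw [hco]
    have hterm : ∀ m : M, (sfun H ρ (f.1 (inr m))).1 (g * (inr m)⁻¹) =
        if g.right * m⁻¹ ∈ Rχ then f.1 g else 0 := by
      intro m
      have hre : (g * (inr m)⁻¹).right = g.right * m⁻¹ := by
        rw [← map_inv, mul_right, right_inr]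
      by_cases hmm : g.right * m⁻¹ ∈ Rχ
      · have hx : g * (inr m)⁻¹ ∈ H := (hH _).2 (hre ▸ hmm)
        rw [sfun_apply_mem H ρ _ hx, if_pos hmm]
        have h1 := hmem f ⟨g * (inr m)⁻¹, hx⟩ (inr m)
        have h2 : ((⟨g * (inr m)⁻¹, hx⟩ : H) : N ⋊[φ] M) * inr m = g := by
          simp
        rw [h2] at h1
        exact h1.symm
      · have hx : g * (inr m)⁻¹ ∉ H := fun hmem' => hmm (hre ▸ (hH _).1 hmem')
        rw [sfun_apply_notMem H ρ _ hx, if_neg hmm]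
    rw [Finset.sum_congr rfl (fun m _ => hterm m)]
    have hsum : ∑ m : M, (if g.right * m⁻¹ ∈ Rχ then f.1 g else 0) =
        ∑ m : M, (if m ∈ Rχ then f.1 g else 0) := by
      refine (Fintype.sum_bijective (fun m => m⁻¹ * g.right)
        (((Equiv.inv M).trans (Equiv.mulRight g.right)).bijective) _ _ (fun m => ?_)).symm
      have hcond : g.right * (m⁻¹ * g.right)⁻¹ = m := by group
      rw [hcond]
    rw [hsum, ← Finset.sum_filter, Finset.sum_const, ← hcdef,
      ← Nat.cast_smul_eq_nsmul ℂ, smul_smul, inv_mul_cancel₀ hc, one_smul]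
  rw [hrepr]
  exact Submodule.smul_mem _ _ (Submodule.sum_mem _ fun m _ => hU _ _ (hsU _))
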